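/- Every finite poset P of height h is a weak subposet of the complete h-level poset K_{a_1,...,a_h}, where a_1,...,a_h are the sizes of the antichains in a Mirsky decomposition of P; and K_{a_1,...,a_h} is in turn a weak subposet of the product D_{a_1} ⊗ D_{a_2} ⊗ ... ⊗ D_{a_h}. -/

import Mathlib

/-- The "level poset" with `m` levels of sizes `f 0, …, f (m-1)`: every element of a
lower level is below every element of a higher level, and distinct elements of the same
level are incomparable. With all level sizes `f i = a i` this is the complete multilevel
poset `K_{a_1,…,a_m}`; with alternating sizes `1, a_1, 1, a_2, 1, …, a_m, 1` it is the
product of generalized diamonds `D_{a_1} ⊗ D_{a_2} ⊗ … ⊗ D_{a_m}`. -/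
structure LevelPoset (m : ℕ) (f : Fin m → ℕ) where
  level : Fin m
  idx : Fin (f level)

instance {m : ℕ} {f : Fin m → ℕ} : PartialOrder (LevelPoset m f) where
  le s t := s = t ∨ s.level < t.level
  le_refl s := Or.inl rfl
  le_trans s t u hst htu := by
    rcases hst with rfl | hst
    · exact htu
    · rcases htu with rfl | htu
      · exact Or.inr hst
      · exact Or.inr (hst.trans htu)
  le_antisymm s t hst hts := by
    rcases hst with rfl | hst
    · rfl
    · rcases hts with rfl | hts
      · rfl
      · exact absurd hts (lt_asymm hst)

/-- The complete `h`-level poset `K_{a_1,…,a_h}`. -/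
abbrev CompleteMultilevel (h : ℕ) (a : Fin h → ℕ) := LevelPoset h a

/-- The level-size function of the chained diamond product
`D_{a_1} ⊗ D_{a_2} ⊗ … ⊗ D_{a_h}`: levels `0,1,…,2h` where even levels are singletons
and the `(2i+1)`-st level has `a i` elements. -/
def diamondSizes (h : ℕ) (a : Fin h → ℕ) : Fin (2 * h + 1) → ℕ := fun ℓ =>
  if hℓ : (ℓ : ℕ) % 2 = 1 then a ⟨(ℓ : ℕ) / 2, by omega⟩ else 1

/-- The product of generalized diamonds `D_{a_1} ⊗ D_{a_2} ⊗ … ⊗ D_{a_h}`. -/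
abbrev DiamondProduct (h : ℕ) (a : Fin h → ℕ) := LevelPoset (2 * h + 1) (diamondSizes h a)

/-- Every poset `P` with a Mirsky decomposition into `h` antichains of sizes
`a 0, …, a (h-1)` is a weak subposet of `K_{a_1,…,a_h}`, which in turn is a weak subposet
of `D_{a_1} ⊗ … ⊗ D_{a_h}`. Here `lvl : P → Fin h` records the Mirsky decomposition:
each fibre is an antichain of size `a i`, and `x < y` implies `lvl x < lvl y`. -/
theorem embed_into_complete_multilevel_and_diamonds
    (P : Type*) [PartialOrder P] [Fintype P] (h : ℕ) (a : Fin h → ℕ)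
    (lvl : P → Fin h)
    (hmirsky : ∀ x y : P, x < y → lvl x < lvl y)
    (hsizes : ∀ i : Fin h, Nat.card {x : P // lvl x = i} = a i) :
    (∃ φ : P → CompleteMultilevel h a, Function.Injective φ ∧
        ∀ x y : P, x ≤ y → φ x ≤ φ y) ∧
    (∃ ψ : CompleteMultilevel h a → DiamondProduct h a, Function.Injective ψ ∧
        ∀ x y : CompleteMultilevel h a, x ≤ y → ψ x ≤ ψ y) := by
  constructor
  · have e : ∀ i : Fin h, {x : P // lvl x = i} ≃ Fin (a i) := fun i =>
      Fintype.equivFinOfCardEq (by rw [← Nat.card_eq_fintype_card]; exact hsizes i)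
    refine ⟨fun x => ⟨lvl x, e (lvl x) ⟨x, rfl⟩⟩, ?_, ?_⟩
    · intro x y hxy
      rw [LevelPoset.mk.injEq] at hxy
      obtain ⟨hl, hh⟩ := hxy
      have hs : (⟨lvl x, (e (lvl x)) ⟨x, rfl⟩⟩ : Σ i, Fin (a i)) =
          ⟨lvl y, (e (lvl y)) ⟨y, rfl⟩⟩ := Sigma.ext hl hh
      have hs2 : (⟨lvl x, ⟨x, rfl⟩⟩ : Σ i, {z : P // lvl z = i}) = ⟨lvl y, ⟨y, rfl⟩⟩ :=
        (Equiv.sigmaCongrRight e).injective hs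
      exact congrArg (fun s : Σ i, {z : P // lvl z = i} => (s.2 : P)) hs2
    · intro x y hxy
      rcases eq_or_lt_of_le hxy with rfl | hlt
      · exact Or.inl rfl
      · exact Or.inr (hmirsky _ _ hlt)
  · have hdiam : ∀ i : Fin h, diamondSizes h a ⟨2 * (i : ℕ) + 1, by omega⟩ = a i := by
      intro i
      simp only [diamondSizes, Fin.val_mk]
      rw [dif_pos (by omega)]
      congr 1
      exact Fin.ext (by simp only [Fin.val_mk]; omega)
    refine ⟨fun s => ⟨⟨2 * (s.level : ℕ) + 1, by omega⟩,
      Fin.cast (hdiam s.level).symm s.idx⟩, ?_, ?_⟩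
    · rintro ⟨l, j⟩ ⟨l', j'⟩ hst
      rw [LevelPoset.mk.injEq] at hst
      obtain ⟨h1, h2⟩ := hst
      have hv : 2 * (l : ℕ) + 1 = 2 * (l' : ℕ) + 1 := congrArg Fin.val h1
      have hll : l = l' := Fin.ext (by omega)
      subst hll
      have hj : (j : ℕ) = (j' : ℕ) := by
        have := congrArg Fin.val (heq_eq_eq _ _ ▸ h2)
        simpa using this
      rw [Fin.ext hj]
    · rintro ⟨l, j⟩ ⟨l', j'⟩ hst
      rcases hst with heq | hlt
      · left; rw [heq]
      · refine Or.inr ?_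
        show (2 * (l : ℕ) + 1) < 2 * (l' : ℕ) + 1
        have : (l : ℕ) < l' := hlt
        omega
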